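/- Let q ∈ ℝ with q ≠ 1 and let (I_n : Δ_n → ℝ)_{n ≥ 1} satisfy q-multiplicativity and symmetry. Then for all n, k ≥ 1, w ∈ Δ_n, and p ∈ Δ_k, (∑_{i : w_i > 0} w_i^q − 1) · I_k(p) = (∑_{i : p_i > 0} p_i^q − 1) · I_n(w). -/

import Mathlib

open Finset MeasureTheory

/-- `p` is a probability distribution on `{1, …, n}` (i.e. `p ∈ Δₙ`). -/
def IsDist {n : ℕ} (p : Fin n → ℝ) : Prop :=
  (∀ i, 0 ≤ p i) ∧ ∑ i, p i = 1

/-- The tensor product `w ⊗ p = (w₁p₁, …, w₁p_k, …, wₙp₁, …, wₙp_k) ∈ Δ_{nk}`. -/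
def tensor {n k : ℕ} (w : Fin n → ℝ) (p : Fin k → ℝ) : Fin (n * k) → ℝ :=
  fun j => w (finProdFinEquiv.symm j).1 * p (finProdFinEquiv.symm j).2

/-- q-multiplicativity: `I(w ⊗ p) = I(w) + (∑_{i : wᵢ > 0} wᵢ^q) I(p)`. -/
def QMult (q : ℝ) (I : ∀ n : ℕ, (Fin n → ℝ) → ℝ) : Prop :=
  ∀ (n k : ℕ) (w : Fin n → ℝ) (p : Fin k → ℝ), IsDist w → IsDist p →
    I (n * k) (tensor w p) = I n w + (∑ i, if 0 < w i then w i ^ q else 0) * I k p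

/-- Symmetry: `I(p) = I(pσ)` for every permutation `σ`, where `(pσ)ᵢ = p_{σ(i)}`. -/
def SymmEnt (I : ∀ n : ℕ, (Fin n → ℝ) → ℝ) : Prop :=
  ∀ (n : ℕ) (p : Fin n → ℝ) (σ : Equiv.Perm (Fin n)), IsDist p → I n p = I n (p ∘ σ)

lemma isDist_comp_equiv {n m : ℕ} {f : Fin n → ℝ} (hf : IsDist f) (e : Fin m ≃ Fin n) :
    IsDist (f ∘ e) := by
  refine ⟨fun i => hf.1 _, ?_⟩
  rw [← hf.2]
  exact Fintype.sum_equiv e _ _ (fun _ => rfl)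

lemma isDist_tensor {n k : ℕ} {w : Fin n → ℝ} {p : Fin k → ℝ} (hw : IsDist w)
    (hp : IsDist p) : IsDist (tensor w p) := by
  constructor
  · intro j
    exact mul_nonneg (hw.1 _) (hp.1 _)
  · rw [Fintype.sum_equiv finProdFinEquiv.symm (tensor w p)
      (fun x : Fin n × Fin k => w x.1 * p x.2) (fun _ => rfl)]
    rw [Fintype.sum_prod_type, ← Finset.sum_mul_sum, hw.2, hp.2, one_mul]

lemma I_cast (I : ∀ n : ℕ, (Fin n → ℝ) → ℝ) {a b : ℕ} (h : a = b) (f : Fin b → ℝ) :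
    I b f = I a (f ∘ finCongr h) := by
  subst h; rfl

/-- The key step in the characterization of q-logarithmic entropy:
`(∑_{i : wᵢ > 0} wᵢ^q - 1) I(p) = (∑_{i : pᵢ > 0} pᵢ^q - 1) I(w)`. -/
theorem qMult_symm_key (q : ℝ) (hq : q ≠ 1) (I : ∀ n : ℕ, (Fin n → ℝ) → ℝ)
    (hMult : QMult q I) (hSymm : SymmEnt I)
    (n k : ℕ) (w : Fin n → ℝ) (p : Fin k → ℝ) (hw : IsDist w) (hp : IsDist p) :
    ((∑ i, if 0 < w i then w i ^ q else 0) - 1) * I k p =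
      ((∑ i, if 0 < p i then p i ^ q else 0) - 1) * I n w := by
  have h1 := hMult n k w p hw hp
  have h2 := hMult k n p w hp hw
  have hnk : n * k = k * n := Nat.mul_comm n k
  -- permutation relating tensor w p with tensor p w
  set σ : Equiv.Perm (Fin (n * k)) :=
    finProdFinEquiv.symm.trans ((Equiv.prodComm (Fin n) (Fin k)).trans
      (finProdFinEquiv.trans (finCongr hnk.symm))) with hσ
  have hfun : (tensor p w ∘ finCongr hnk) ∘ σ = tensor w p := by
    funext j
    simp only [Function.comp_apply, hσ, Equiv.trans_apply, tensor, finCongr_apply,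
      Fin.cast_cast, Fin.cast_eq_self, Equiv.symm_apply_apply, Equiv.prodComm_apply,
      Prod.fst_swap, Prod.snd_swap]
    exact mul_comm _ _
  have hdist : IsDist (tensor p w ∘ finCongr hnk) :=
    isDist_comp_equiv (isDist_tensor hp hw) (finCongr hnk)
  have key : I (n * k) (tensor w p) = I (k * n) (tensor p w) := by
    rw [I_cast I hnk (tensor p w), hSymm (n * k) _ σ hdist, hfun]
  rw [h1, h2] at key
  linarith
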